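/- For β > 5, the SOS contour weights w_β(γ) = 1/(e^{β|γ̃|} − 1) satisfy the Kotecký–Preiss criterion: for every dual vertex x*, Σ_{γ : x*∈γ} e^{(β−4)|γ̃|}/(e^{β|γ̃|} − 1) ≤ 1. -/
import Mathlib


open scoped ENNReal

abbrev V : Type := ℤ × ℤ

/-- Nearest-neighbour adjacency on the dual lattice `(ℤ²)*` (indexed by `ℤ²`). -/
def adj (x y : V) : Prop := |x.1 - y.1| + |x.2 - y.2| = 1

/-- An edge of the dual lattice. -/
def IsDualEdge (e : Sym2 V) : Prop := ∃ x y : V, adj x y ∧ e = s(x, y)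

def north (x : V) : V := (x.1, x.2 + 1)
def south (x : V) : V := (x.1, x.2 - 1)
def east (x : V) : V := (x.1 + 1, x.2)
def west (x : V) : V := (x.1 - 1, x.2)

/-- Two dual edges meeting at `x` are linked if they both lie on the same side of the line
making an angle `π/4` with the horizontal and passing through `x`. -/
def LinkedAt (x : V) (e f : Sym2 V) : Prop :=
  ({e, f} : Set (Sym2 V)) = {s(x, north x), s(x, west x)} ∨
  ({e, f} : Set (Sym2 V)) = {s(x, south x), s(x, east x)}

def cyc {n : ℕ} (i : Fin n) : Fin n := ⟨(i.val + 1) % n, Nat.mod_lt _ i.pos⟩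

def IsContourFun {n : ℕ} (e : Fin n → Sym2 V) : Prop :=
  Function.Injective e ∧ (∀ i, IsDualEdge (e i)) ∧
  (∀ i, ∃ x : V, x ∈ e i ∧ x ∈ e (cyc i)) ∧
  (∀ i j : Fin n, i ≠ j → ∀ x : V,
    x ∈ e i → x ∈ e (cyc i) → x ∈ e j → x ∈ e (cyc j) →
    LinkedAt x (e i) (e (cyc i)) ∧ LinkedAt x (e j) (e (cyc j)))

/-- A geometric contour: a finite set of dual edges that forms a contour sequence. -/
def IsGeomContour (γ : Finset (Sym2 V)) : Prop :=
  ∃ (n : ℕ) (e : Fin n → Sym2 V), IsContourFun e ∧ γ = Finset.image e Finset.univ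

/-! ### Auxiliary material: encoding contours through `x` as walks -/

/-- The four lattice directions. -/
def dirv (d : Fin 4) : V :=
  if d = 0 then (0, 1) else if d = 1 then (0, -1) else if d = 2 then (1, 0) else (-1, 0)

/-- Select one of the two representative endpoints of a `Sym2`. -/
noncomputable def selv (e : Sym2 V) (c : Fin 2) : V :=
  if c = 0 then (Quot.out e).1 else (Quot.out e).2

noncomputable def stepv (e : Sym2 V) (p : Fin 2 × Fin 4) : Sym2 V :=
  s(selv e p.1, selv e p.1 + dirv p.2)

noncomputable def decodeAux (x : V) (f : ℕ → Fin 2 × Fin 4) : ℕ → Sym2 V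
  | 0 => s(x, x + dirv (f 0).2)
  | i + 1 => stepv (decodeAux x f i) (f (i + 1))

noncomputable def decodeF (x : V) {n : ℕ} (f : Fin n → Fin 2 × Fin 4) (i : Fin n) : Sym2 V :=
  decodeAux x (fun k => if h : k < n then f ⟨k, h⟩ else (0, 0)) i.val

lemma decodeAux_congr (x : V) {f g : ℕ → Fin 2 × Fin 4} :
    ∀ i : ℕ, (∀ k ≤ i, f k = g k) → decodeAux x f i = decodeAux x g i := by
  intro i
  induction i with
  | zero => intro h; simp [decodeAux, h 0 le_rfl]
  | succ m ih =>
      intro h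
      have h1 : decodeAux x f m = decodeAux x g m := ih fun k hk => h k (hk.trans (Nat.le_succ m))
      simp [decodeAux, h1, h (m + 1) le_rfl]

lemma sym2_out_eq (e : Sym2 V) : e = s((Quot.out e).1, (Quot.out e).2) := by
  conv_lhs => rw [← Quot.out_eq e]

lemma mem_out {e : Sym2 V} {v : V} (h : v ∈ e) :
    v = (Quot.out e).1 ∨ v = (Quot.out e).2 := by
  rw [sym2_out_eq e, Sym2.mem_iff] at h; exact h

lemma adj_exists_dir {u w : V} (h : adj u w) : ∃ d : Fin 4, w = u + dirv d := by
  unfold adj at h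
  have h1 := abs_cases (u.1 - w.1)
  have h2 := abs_cases (u.2 - w.2)
  have hcases : (w.1 = u.1 ∧ w.2 = u.2 + 1) ∨ (w.1 = u.1 ∧ w.2 = u.2 - 1) ∨
      (w.1 = u.1 + 1 ∧ w.2 = u.2) ∨ (w.1 = u.1 - 1 ∧ w.2 = u.2) := by
    rcases h1 with ⟨e1, _⟩ | ⟨e1, _⟩ <;> rcases h2 with ⟨e2, _⟩ | ⟨e2, _⟩ <;> omega
  rcases hcases with ⟨a, b⟩ | ⟨a, b⟩ | ⟨a, b⟩ | ⟨a, b⟩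
  · exact ⟨0, Prod.ext (by simp [dirv, a]) (by simp [dirv, b])⟩
  · exact ⟨1, Prod.ext (by simp [dirv, a]) (by simp [dirv, b]; omega)⟩
  · exact ⟨2, Prod.ext (by simp [dirv, a]) (by simp [dirv, b])⟩
  · exact ⟨3, Prod.ext (by simp [dirv, a]; omega) (by simp [dirv, b])⟩

lemma adj_symm {u w : V} (h : adj u w) : adj w u := by
  unfold adj at *
  rw [abs_sub_comm w.1 u.1, abs_sub_comm w.2 u.2]; exact h

lemma dualEdge_mem {e : Sym2 V} {v : V} (he : IsDualEdge e) (hv : v ∈ e) :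
    ∃ d : Fin 4, e = s(v, v + dirv d) := by
  obtain ⟨a, b, hab, rfl⟩ := he
  rw [Sym2.mem_iff] at hv
  rcases hv with rfl | rfl
  · obtain ⟨d, hd⟩ := adj_exists_dir hab
    exact ⟨d, by rw [← hd]⟩
  · obtain ⟨d, hd⟩ := adj_exists_dir (adj_symm hab)
    exact ⟨d, by rw [← hd, Sym2.eq_swap]⟩

/-- Any contour function with `x` on its initial edge can be decoded from a walk code. -/
lemma encode_exists {n : ℕ} (x : V) (e : Fin n → Sym2 V)
    (hd : ∀ i, IsDualEdge (e i)) (hs : ∀ i, ∃ v : V, v ∈ e i ∧ v ∈ e (cyc i))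
    (hx : ∀ h0 : 0 < n, x ∈ e ⟨0, h0⟩) :
    ∃ f : Fin n → Fin 2 × Fin 4, ∀ i : Fin n, decodeF x f i = e i := by
  rcases Nat.eq_zero_or_pos n with rfl | hn
  · exact ⟨fun i => (0, 0), fun i => absurd i.pos (by simp)⟩
  -- build a global code by induction
  have main : ∀ m : ℕ, ∃ g : ℕ → Fin 2 × Fin 4,
      ∀ i : Fin n, i.val ≤ m → decodeAux x g i.val = e i := by
    intro m
    induction m with
    | zero =>
        obtain ⟨d, hd0⟩ := dualEdge_mem (hd ⟨0, hn⟩) (hx hn)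
        refine ⟨fun _ => (0, d), fun i hi => ?_⟩
        have : i = ⟨0, hn⟩ := Fin.ext (Nat.le_zero.1 hi)
        subst this
        simp [decodeAux, hd0]
    | succ m ih =>
        obtain ⟨g, hg⟩ := ih
        by_cases hlt : m + 1 < n
        · -- extend the code
          have hcyc : cyc (⟨m, lt_trans (Nat.lt_succ_self m) hlt⟩ : Fin n) = ⟨m + 1, hlt⟩ := by
            apply Fin.ext
            simp [cyc, Nat.mod_eq_of_lt hlt]
          obtain ⟨v, hv1, hv2⟩ := hs ⟨m, lt_trans (Nat.lt_succ_self m) hlt⟩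
          rw [hcyc] at hv2
          set Em := e ⟨m, lt_trans (Nat.lt_succ_self m) hlt⟩ with hEm
          have hvor := mem_out hv1
          have hc : ∃ c : Fin 2, selv Em c = v := by
            rcases hvor with h | h
            · exact ⟨0, by simp [selv, h]⟩
            · exact ⟨1, by simp [selv, h]⟩
          obtain ⟨c, hcv⟩ := hc
          obtain ⟨d, hd1⟩ := dualEdge_mem (hd ⟨m + 1, hlt⟩) hv2
          refine ⟨Function.update g (m + 1) (c, d), fun i hi => ?_⟩
          have hagree : ∀ k ≤ m, Function.update g (m + 1) (c, d) k = g k := by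
            intro k hk
            exact Function.update_of_ne (by omega) _ _
          rcases Nat.lt_succ_iff_lt_or_eq.1 (Nat.lt_succ_of_le hi) with hlt' | heq
          · rw [decodeAux_congr x i.val fun k hk => hagree k (by omega)]
            exact hg i (by omega)
          · have hdm : decodeAux x (Function.update g (m + 1) (c, d)) m = Em := by
              rw [decodeAux_congr x m fun k hk => hagree k hk]
              exact hg ⟨m, lt_trans (Nat.lt_succ_self m) hlt⟩ le_rfl
            have hieq : i = ⟨m + 1, hlt⟩ := Fin.ext heq
            subst hieq
            show decodeAux x (Function.update g (m + 1) (c, d)) (m + 1) = _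
            rw [decodeAux, hdm, Function.update_self]
            rw [hd1]
            simp [stepv, hcv]
        · exact ⟨g, fun i hi => hg i (by omega)⟩
  obtain ⟨g, hg⟩ := main n
  refine ⟨fun i => g i.val, fun i => ?_⟩
  unfold decodeF
  rw [decodeAux_congr x i.val fun k hk => ?_]
  · exact hg i (le_of_lt i.isLt)
  · have hkn : k < n := lt_of_le_of_lt hk i.isLt
    simp [hkn]

/-- Rotate a contour function so its initial edge is a prescribed one. -/
lemma rotate_contour {n : ℕ} (e : Fin n → Sym2 V) (he : IsContourFun e) (j : Fin n) :
    ∃ e' : Fin n → Sym2 V, IsContourFun e' ∧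
      Finset.image e' Finset.univ = Finset.image e Finset.univ ∧
      e' ⟨0, j.pos⟩ = e j := by
  haveI : NeZero n := ⟨Nat.pos_iff_ne_zero.1 j.pos⟩
  refine ⟨fun i => e (j + i), ?_, ?_, ?_⟩
  · obtain ⟨hinj, hdual, hshare, hlink⟩ := he
    have hcyc : ∀ i : Fin n, j + cyc i = cyc (j + i) := by
      intro i
      apply Fin.ext
      rw [Fin.val_add]
      show (j.val + (i.val + 1) % n) % n = ((j + i).val + 1) % n
      rw [Fin.val_add, Nat.add_mod_mod, Nat.mod_add_mod, Nat.add_assoc]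
    refine ⟨hinj.comp fun a b hab => by exact add_left_cancel hab, fun i => hdual _,
      fun i => by rw [show (fun i => e (j + i)) (cyc i) = e (cyc (j + i)) from by rw [← hcyc]]
                  exact hshare (j + i), ?_⟩
    intro i i' hne v h1 h2 h3 h4
    have h2' : v ∈ e (cyc (j + i)) := by rw [← hcyc]; exact h2
    have h4' : v ∈ e (cyc (j + i')) := by rw [← hcyc]; exact h4
    have H := hlink (j + i) (j + i') (fun h => hne (add_left_cancel h)) v h1 h2' h3 h4'
    constructor
    · show LinkedAt v (e (j + i)) (e (j + cyc i))
      rw [hcyc]; exact H.1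
    · show LinkedAt v (e (j + i')) (e (j + cyc i'))
      rw [hcyc]; exact H.2
  · have himg : Finset.image (fun i : Fin n => j + i) Finset.univ = Finset.univ := by
      apply Finset.eq_univ_iff_forall.2
      intro k
      simp only [Finset.mem_image, Finset.mem_univ, true_and]
      exact ⟨k - j, by simp⟩
    conv_rhs => rw [← himg]
    rw [Finset.image_image]
    rfl
  · have : j + (⟨0, j.pos⟩ : Fin n) = j := by
      apply Fin.ext
      rw [Fin.val_add]
      exact Nat.mod_eq_of_lt (by simpa using j.isLt)
    show e (j + ⟨0, j.pos⟩) = e j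
    rw [this]

/-- Every contour through `x` is the image of a decoded walk of its own length. -/
lemma contour_encode (x : V) (γ : Finset (Sym2 V)) (h1 : IsGeomContour γ)
    (h2 : ∃ e ∈ γ, x ∈ e) :
    ∃ (n : ℕ) (f : Fin n → Fin 2 × Fin 4),
      γ = Finset.image (decodeF x f) Finset.univ ∧ γ.card = n := by
  obtain ⟨n, e, hc, rfl⟩ := h1
  obtain ⟨ε, hεγ, hxε⟩ := h2
  rw [Finset.mem_image] at hεγ
  obtain ⟨j, -, hj⟩ := hεγ
  obtain ⟨e', he', himg, he0⟩ := rotate_contour e hc j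
  have hx0 : ∀ h0 : 0 < n, x ∈ e' ⟨0, h0⟩ := by
    intro h0
    have : (⟨0, h0⟩ : Fin n) = ⟨0, j.pos⟩ := rfl
    rw [this, he0, hj]; exact hxε
  obtain ⟨f, hf⟩ := encode_exists x e' he'.2.1 he'.2.2.1 hx0
  refine ⟨n, f, ?_, ?_⟩
  · rw [← himg]
    congr 1
    exact funext fun i => (hf i).symm
  · rw [Finset.card_image_of_injective _ hc.1, Finset.card_univ, Fintype.card_fin]

/-- The real bound on an individual weight. -/
lemma weight_bound (β : ℝ) (hβ : 5 < β) (m : ℝ) (hm : 1 ≤ m) :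
    Real.exp ((β - 4) * m) / (Real.exp (β * m) - 1) ≤
      (1 - Real.exp (-5))⁻¹ * Real.exp (-(4 * m)) := by
  have h5 : (0 : ℝ) < 1 - Real.exp (-5) := by
    have : Real.exp (-5) < 1 := Real.exp_lt_one_iff.2 (by norm_num)
    linarith
  have hβm : (5 : ℝ) ≤ β * m := by nlinarith
  have hexp1 : (1 : ℝ) ≤ Real.exp (β * m - 5) := Real.one_le_exp (by linarith)
  have hprod : Real.exp (β * m) * Real.exp (-5) = Real.exp (β * m - 5) := by
    rw [← Real.exp_add]; ring_nf
  have hden : Real.exp (β * m) * (1 - Real.exp (-5)) ≤ Real.exp (β * m) - 1 := by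
    nlinarith [Real.exp_pos (β * m)]
  have hden0 : (0 : ℝ) < Real.exp (β * m) * (1 - Real.exp (-5)) :=
    mul_pos (Real.exp_pos _) h5
  have step1 : Real.exp ((β - 4) * m) / (Real.exp (β * m) - 1) ≤
      Real.exp ((β - 4) * m) / (Real.exp (β * m) * (1 - Real.exp (-5))) :=
    div_le_div_of_nonneg_left (Real.exp_pos _).le hden0 hden
  have step2 : Real.exp ((β - 4) * m) / (Real.exp (β * m) * (1 - Real.exp (-5))) =
      (1 - Real.exp (-5))⁻¹ * Real.exp (-(4 * m)) := by
    rw [div_mul_eq_div_div, ← Real.exp_sub, show (β - 4) * m - β * m = -(4 * m) by ring,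
      div_eq_inv_mul]
  exact le_of_le_of_eq step1 step2


lemma exp_nat_ge (n : ℕ) : (2.7 : ℝ) ^ n ≤ Real.exp n := by
  have h1 : Real.exp (n : ℝ) = Real.exp 1 ^ n := by
    rw [← Real.exp_nat_mul, mul_one]
  rw [h1]
  exact pow_le_pow_left₀ (by norm_num) (le_trans (by norm_num) Real.exp_one_gt_d9.le) n

lemma exp_four_ge : (53 : ℝ) ≤ Real.exp 4 := by
  have h := exp_nat_ge 4
  norm_num at h
  linarith

lemma exp_five_ge : (143 : ℝ) ≤ Real.exp 5 := by
  have h := exp_nat_ge 5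
  norm_num at h
  linarith

lemma exp_neg_four_le : Real.exp (-4) ≤ 1 / 53 := by
  rw [Real.exp_neg, show (1 / 53 : ℝ) = ((53 : ℝ))⁻¹ by norm_num]
  exact inv_anti₀ (by norm_num) exp_four_ge

lemma exp_neg_five_le : Real.exp (-5) ≤ 1 / 143 := by
  rw [Real.exp_neg, show (1 / 143 : ℝ) = ((143 : ℝ))⁻¹ by norm_num]
  exact inv_anti₀ (by norm_num) exp_five_ge

noncomputable def aW (β : ℝ) (n : ℕ) : ℝ≥0∞ :=
  ENNReal.ofReal (Real.exp ((β - 4) * (n : ℝ)) / (Real.exp (β * (n : ℝ)) - 1))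

lemma sum_bound (β : ℝ) (hβ : 5 < β) :
    (∑' n : ℕ, (8 : ℝ≥0∞) ^ n * aW β n) ≤ ENNReal.ofReal (1 / 2) := by
  set aN : ℕ → ℝ≥0∞ := aW β with haN
  set C : ℝ≥0∞ := ENNReal.ofReal ((1 - Real.exp (-5))⁻¹) with hC
  set Q : ℝ≥0∞ := ENNReal.ofReal (Real.exp (-4)) with hQ
  have hu0 : (8 : ℝ≥0∞) ^ 0 * aN 0 = 0 := by
    simp [haN, aW]
  have hterm : ∀ n : ℕ, aN (n + 1) ≤ C * Q ^ (n + 1) := by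
    intro n
    have hm : (1 : ℝ) ≤ ((n + 1 : ℕ) : ℝ) := by
      have : (0 : ℝ) ≤ (n : ℝ) := Nat.cast_nonneg n
      push_cast
      linarith
    have hb := weight_bound β hβ ((n + 1 : ℕ) : ℝ) hm
    calc aN (n + 1) ≤ ENNReal.ofReal ((1 - Real.exp (-5))⁻¹ *
        Real.exp (-(4 * ((n + 1 : ℕ) : ℝ)))) := by
          rw [haN]
          exact ENNReal.ofReal_le_ofReal hb
      _ = C * Q ^ (n + 1) := by
          have hlt : Real.exp (-5) < 1 := Real.exp_lt_one_iff.2 (by norm_num)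
          rw [ENNReal.ofReal_mul (inv_nonneg.2 (by linarith)), hC, hQ]
          congr 1
          rw [show -(4 * ((n + 1 : ℕ) : ℝ)) = ((n + 1 : ℕ) : ℝ) * (-4) by ring,
            Real.exp_nat_mul, ENNReal.ofReal_pow (Real.exp_pos _).le]
  set R : ℝ≥0∞ := 8 * Q with hR
  have hCle : C ≤ ENNReal.ofReal (143 / 142) := by
    apply ENNReal.ofReal_le_ofReal
    have h5 := exp_neg_five_le
    have hpos : (142 / 143 : ℝ) ≤ 1 - Real.exp (-5) := by linarith
    calc (1 - Real.exp (-5))⁻¹ ≤ ((142 / 143 : ℝ))⁻¹ :=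
          inv_anti₀ (by norm_num) hpos
      _ = 143 / 142 := by norm_num
  have hRle : R ≤ ENNReal.ofReal (8 / 53) := by
    rw [hR, show (8 : ℝ≥0∞) = ENNReal.ofReal 8 by norm_num, ← ENNReal.ofReal_mul (by norm_num)]
    apply ENNReal.ofReal_le_ofReal
    have := exp_neg_four_le
    linarith
  calc (∑' n : ℕ, (8 : ℝ≥0∞) ^ n * aN n)
      = (8 : ℝ≥0∞) ^ 0 * aN 0 + ∑' n : ℕ, (8 : ℝ≥0∞) ^ (n + 1) * aN (n + 1) :=
        tsum_eq_zero_add' ENNReal.summable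
    _ = ∑' n : ℕ, (8 : ℝ≥0∞) ^ (n + 1) * aN (n + 1) := by rw [hu0, zero_add]
    _ ≤ ∑' n : ℕ, (8 : ℝ≥0∞) ^ (n + 1) * (C * Q ^ (n + 1)) :=
        ENNReal.tsum_le_tsum fun n => mul_le_mul_right (hterm n) _
    _ = ∑' n : ℕ, C * (R * R ^ n) := by
        apply tsum_congr
        intro n
        rw [hR]
        ring
    _ = C * (R * ∑' n : ℕ, R ^ n) := by
        rw [ENNReal.tsum_mul_left, ENNReal.tsum_mul_left]
    _ = C * (R * (1 - R)⁻¹) := by rw [ENNReal.tsum_geometric]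
    _ ≤ ENNReal.ofReal (143 / 142) *
          (ENNReal.ofReal (8 / 53) * (1 - ENNReal.ofReal (8 / 53))⁻¹) := by
        gcongr
    _ = ENNReal.ofReal (143 / 142) * (ENNReal.ofReal (8 / 53) * ENNReal.ofReal (53 / 45)) := by
        congr 1
        congr 1
        rw [show (1 : ℝ≥0∞) = ENNReal.ofReal 1 by norm_num,
          ← ENNReal.ofReal_sub _ (by norm_num : (0 : ℝ) ≤ 8 / 53),
          show (1 - 8 / 53 : ℝ) = 45 / 53 by norm_num,
          ← ENNReal.ofReal_inv_of_pos (by norm_num)]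
        norm_num
    _ ≤ ENNReal.ofReal (1 / 2) := by
        rw [← ENNReal.ofReal_mul (by norm_num), ← ENNReal.ofReal_mul (by norm_num)]
        apply ENNReal.ofReal_le_ofReal
        norm_num

set_option maxHeartbeats 2000000 in
theorem sos_weights_satisfy_kp (β : ℝ) (hβ : 5 < β) (x : V) :
    (∑' γ : {γ : Finset (Sym2 V) × Bool // IsGeomContour γ.1 ∧ ∃ e ∈ γ.1, x ∈ e},
        ENNReal.ofReal
          (Real.exp ((β - 4) * (γ.1.1.card : ℝ)) / (Real.exp (β * (γ.1.1.card : ℝ)) - 1)))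
      ≤ 1 := by
  classical
  have key : ∀ s : {γ : Finset (Sym2 V) × Bool // IsGeomContour γ.1 ∧ ∃ e ∈ γ.1, x ∈ e},
      ∃ t : (Σ n : ℕ, (Fin n → Fin 2 × Fin 4)) × Bool,
        s.1.1 = Finset.image (decodeF x t.1.2) Finset.univ ∧ s.1.1.card = t.1.1 ∧
          s.1.2 = t.2 := by
    rintro ⟨⟨γ, b⟩, hγ, hx2⟩
    obtain ⟨n, f, hf1, hf2⟩ := contour_encode x γ hγ hx2
    exact ⟨(⟨n, f⟩, b), hf1, hf2, rfl⟩
  choose F hF1 hF2 hF3 using key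
  have hinj : Function.Injective F := by
    intro s1 s2 h
    apply Subtype.ext
    apply Prod.ext
    · rw [hF1 s1, hF1 s2, h]
    · rw [hF3 s1, hF3 s2, h]
  have hcard : ∀ n : ℕ, Fintype.card (Fin n → Fin 2 × Fin 4) = 8 ^ n := by
    intro n
    rw [Fintype.card_fun]
    simp
  calc (∑' γ : {γ : Finset (Sym2 V) × Bool // IsGeomContour γ.1 ∧ ∃ e ∈ γ.1, x ∈ e},
        ENNReal.ofReal
          (Real.exp ((β - 4) * (γ.1.1.card : ℝ)) / (Real.exp (β * (γ.1.1.card : ℝ)) - 1)))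
      = ∑' s : {γ : Finset (Sym2 V) × Bool // IsGeomContour γ.1 ∧ ∃ e ∈ γ.1, x ∈ e},
          aW β (F s).1.1 := by
        apply tsum_congr
        intro s
        show _ = aW β (F s).1.1
        rw [aW, ← hF2 s]
    _ ≤ ∑' t : (Σ n : ℕ, (Fin n → Fin 2 × Fin 4)) × Bool, aW β t.1.1 :=
        ENNReal.tsum_comp_le_tsum_of_injective hinj _
    _ = ∑' σ : Σ n : ℕ, (Fin n → Fin 2 × Fin 4), ∑' _b : Bool, aW β σ.1 :=
        ENNReal.tsum_prod (f := fun (σ : Σ n : ℕ, (Fin n → Fin 2 × Fin 4)) (_ : Bool) => aW β σ.1)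
    _ = ∑' σ : Σ n : ℕ, (Fin n → Fin 2 × Fin 4), (aW β σ.1 + aW β σ.1) := by
        apply tsum_congr
        intro σ
        rw [tsum_bool]
    _ = (∑' σ : Σ n : ℕ, (Fin n → Fin 2 × Fin 4), aW β σ.1) +
        (∑' σ : Σ n : ℕ, (Fin n → Fin 2 × Fin 4), aW β σ.1) := ENNReal.tsum_add
    _ = (∑' n : ℕ, (8 : ℝ≥0∞) ^ n * aW β n) + (∑' n : ℕ, (8 : ℝ≥0∞) ^ n * aW β n) := by
        have hσ : (∑' σ : Σ n : ℕ, (Fin n → Fin 2 × Fin 4), aW β σ.1)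
            = ∑' n : ℕ, (8 : ℝ≥0∞) ^ n * aW β n := by
          rw [ENNReal.tsum_sigma (fun (n : ℕ) (_ : Fin n → Fin 2 × Fin 4) => aW β n)]
          apply tsum_congr
          intro n
          rw [tsum_fintype, Finset.sum_const, Finset.card_univ, hcard, nsmul_eq_mul]
          congr 1
          push_cast
          ring
        rw [hσ]
    _ ≤ ENNReal.ofReal (1 / 2) + ENNReal.ofReal (1 / 2) :=
        add_le_add (sum_bound β hβ) (sum_bound β hβ)
    _ = 1 := by
        rw [← ENNReal.ofReal_add (by norm_num) (by norm_num)]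
        norm_num
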